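/- arXiv:1409.1293 — 5 statements merged into one kernel-verified Lean document; each statement's English description precedes it below -/
import Mathlib

section
/- For integers 0 < m < n such that n/m is not a power of a prime, the quotient ring ℤ[t]/(Φ_m(t), Φ_n(t)) is the zero ring, where Φ_k denotes the k-th cyclotomic polynomial. -/
open Polynomial

/-- Lemma 2.3(1): for `0 < m < n` with `n/m` not a prime power (i.e. there is no
prime `q` and `i ≥ 1` with `n = m * q^i`), the ring `ℤ[t]/(Φ_m(t), Φ_n(t))` is zero. -/
theorem stmt_0 (m n : ℕ) (h0 : 0 < m) (hmn : m < n)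
    (hnp : ¬ ∃ (q i : ℕ), q.Prime ∧ 1 ≤ i ∧ n = m * q ^ i) :
    Subsingleton (ℤ[X] ⧸ Ideal.span ({cyclotomic m ℤ, cyclotomic n ℤ} : Set ℤ[X])) := by
  rw [Ideal.Quotient.subsingleton_iff]
  by_contra hIne
  obtain ⟨M, hMmax, hIM⟩ := Ideal.exists_le_maximal _ hIne
  haveI := hMmax
  let k := ℤ[X] ⧸ M
  letI : Field k := Ideal.Quotient.field M
  have hn0 : 0 < n := h0.trans hmn
  -- the image of X in the residue field
  set x : k := Ideal.Quotient.mkₐ ℤ M X with hx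
  have hroot : ∀ l : ℕ, cyclotomic l ℤ ∈ M → (cyclotomic l k).IsRoot x := by
    intro l hl
    have h1 : aeval x (cyclotomic l ℤ) = 0 := by
      rw [hx, aeval_algHom_apply, aeval_X_left_apply, Ideal.Quotient.mkₐ_eq_mk,
        Ideal.Quotient.eq_zero_iff_mem]
      exact hl
    rwa [aeval_def, ← eval_map, map_cyclotomic] at h1
  have hm' : (cyclotomic m k).IsRoot x :=
    hroot m (hIM (Ideal.subset_span (by simp)))
  have hn' : (cyclotomic n k).IsRoot x :=
    hroot n (hIM (Ideal.subset_span (by simp)))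
  rcases CharP.char_is_prime_or_zero k (ringChar k) with hp | hp
  · -- characteristic p
    haveI : Fact (ringChar k).Prime := ⟨hp⟩
    set p := ringChar k
    have hmfac := Nat.ordProj_mul_ordCompl_eq_self m p
    have hnfac := Nat.ordProj_mul_ordCompl_eq_self n p
    haveI : NeZero (((m / p ^ m.factorization p) : ℕ) : k) :=
      ⟨fun h => Nat.not_dvd_ordCompl hp h0.ne' ((CharP.cast_eq_zero_iff k p _).1 h)⟩
    haveI : NeZero (((n / p ^ n.factorization p) : ℕ) : k) :=
      ⟨fun h => Nat.not_dvd_ordCompl hp hn0.ne' ((CharP.cast_eq_zero_iff k p _).1 h)⟩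
    rw [← hmfac, isRoot_cyclotomic_prime_pow_mul_iff_of_charP] at hm'
    rw [← hnfac, isRoot_cyclotomic_prime_pow_mul_iff_of_charP] at hn'
    have heq : (m / p ^ m.factorization p) = (n / p ^ n.factorization p) := hm'.unique hn'
    set a := m.factorization p
    set b := n.factorization p
    have hab : a < b := by
      have h1 : p ^ a * (m / p ^ m.factorization p) < p ^ b * (n / p ^ n.factorization p) := by
        rw [hmfac, hnfac]; exact hmn
      rw [heq] at h1
      have h2 : p ^ a < p ^ b :=
        Nat.lt_of_mul_lt_mul_right h1
      exact (Nat.pow_lt_pow_iff_right hp.one_lt).1 h2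
    refine hnp ⟨p, b - a, hp, by omega, ?_⟩
    rw [← hmfac, ← hnfac, heq, mul_right_comm, ← pow_add, Nat.add_sub_cancel' hab.le]
  · -- characteristic zero
    haveI : CharP k 0 := by rw [← hp]; exact ringChar.charP k
    haveI : CharZero k := CharP.charP_to_charZero k
    haveI : NeZero ((m : ℕ) : k) := ⟨Nat.cast_ne_zero.2 h0.ne'⟩
    haveI : NeZero ((n : ℕ) : k) := ⟨Nat.cast_ne_zero.2 hn0.ne'⟩
    rw [isRoot_cyclotomic_iff] at hm' hn'
    exact absurd (hm'.unique hn') hmn.ne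
end

section
/- Let p be a prime, n ≥ 1, and let g(t) = ∏_{i=1}^r Φ_{a_i}(t) be a product of cyclotomic polynomials (not necessarily distinct) with each a_i ≥ 2 and p ∤ a_i. Then the quotient ring ℤ[t]/(1 - t^{p^n}, g(t)) is a finite ring. -/
open Polynomial

/-- If two integer polynomials become coprime over `ℚ`, then the ideal they span in `ℤ[X]`
contains a nonzero integer constant. -/
lemma exists_int_mem_span (f g : ℤ[X])
    (h : IsCoprime (f.map (Int.castRingHom ℚ)) (g.map (Int.castRingHom ℚ))) :
    ∃ c : ℤ, c ≠ 0 ∧ (C c) ∈ Ideal.span ({f, g} : Set ℤ[X]) := by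
  obtain ⟨u, v, huv⟩ := h
  obtain ⟨b₁, hb₁⟩ := IsLocalization.integerNormalization_map_to_map (nonZeroDivisors ℤ) u
  obtain ⟨b₂, hb₂⟩ := IsLocalization.integerNormalization_map_to_map (nonZeroDivisors ℤ) v
  set u' := IsLocalization.integerNormalization (nonZeroDivisors ℤ) u with hu'
  set v' := IsLocalization.integerNormalization (nonZeroDivisors ℤ) v with hv'
  refine ⟨(b₁ : ℤ) * (b₂ : ℤ),
    mul_ne_zero (nonZeroDivisors.coe_ne_zero b₁) (nonZeroDivisors.coe_ne_zero b₂), ?_⟩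
  have key : (C (b₂ : ℤ) * u') * f + (C (b₁ : ℤ) * v') * g = C ((b₁ : ℤ) * (b₂ : ℤ)) := by
    apply Polynomial.map_injective (Int.castRingHom ℚ) Int.cast_injective
    have hb₁' : u'.map (Int.castRingHom ℚ) = (b₁ : ℤ) • u := by
      rw [← hb₁]; rfl
    have hb₂' : v'.map (Int.castRingHom ℚ) = (b₂ : ℤ) • v := by
      rw [← hb₂]; rfl
    simp only [Polynomial.map_add, Polynomial.map_mul, map_C, hb₁', hb₂']
    rw [← Int.cast_smul_eq_zsmul ℚ (b₁ : ℤ) u, ← Int.cast_smul_eq_zsmul ℚ (b₂ : ℤ) v,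
      smul_eq_C_mul, smul_eq_C_mul]
    simp only [eq_intCast, Int.cast_mul]
    rw [C_mul]
    linear_combination (C ((b₁ : ℤ) : ℚ) * C ((b₂ : ℤ) : ℚ)) * huv
  rw [← key]
  exact Ideal.mem_span_pair.mpr ⟨_, _, rfl⟩

/-- Lemma 2.4: for a prime `p`, `n ≥ 1`, and `g = ∏_{i=1}^r Φ_{a_i}` with each
`a_i ≥ 2` and `p ∤ a_i`, the ring `ℤ[t]/(1 - t^{p^n}, g(t))` is finite. -/
theorem stmt_2 (p n r : ℕ) (hp : p.Prime) (hn : 1 ≤ n) (a : Fin r → ℕ)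
    (ha2 : ∀ i, 2 ≤ a i) (hpa : ∀ i, ¬ p ∣ a i) :
    Finite (ℤ[X] ⧸ Ideal.span
      ({1 - X ^ (p ^ n), ∏ i, cyclotomic (a i) ℤ} : Set ℤ[X])) := by
  set N : ℕ := p ^ n with hN
  have hNpos : 0 < N := pow_pos hp.pos n
  set g : ℤ[X] := ∏ i, cyclotomic (a i) ℤ with hg
  set I : Ideal ℤ[X] := Ideal.span ({1 - X ^ N, g} : Set ℤ[X]) with hI
  -- `X^N - 1 ∈ I`
  have h1 : (1 - X ^ N : ℤ[X]) ∈ I :=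
    Ideal.subset_span (Set.mem_insert _ _)
  have hgI : g ∈ I := Ideal.subset_span (Set.mem_insert_of_mem _ rfl)
  have hf : (X ^ N - 1 : ℤ[X]) ∈ I := by
    have := I.neg_mem h1
    simpa using this
  -- coprimality over ℚ
  have hcop : IsCoprime ((1 - X ^ N : ℤ[X]).map (Int.castRingHom ℚ))
      (g.map (Int.castRingHom ℚ)) := by
    have hmap1 : (1 - X ^ N : ℤ[X]).map (Int.castRingHom ℚ) = -(X ^ N - 1 : ℚ[X]) := by
      rw [Polynomial.map_sub, Polynomial.map_pow, Polynomial.map_one, map_X, neg_sub]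
    have hmapg : g.map (Int.castRingHom ℚ) = ∏ i, cyclotomic (a i) ℚ := by
      rw [hg, Polynomial.map_prod]
      exact Finset.prod_congr rfl fun i _ => map_cyclotomic _ _
    rw [hmap1, hmapg]
    apply IsCoprime.neg_left
    rw [← prod_cyclotomic_eq_X_pow_sub_one hNpos ℚ]
    apply IsCoprime.prod_left
    intro d hd
    apply IsCoprime.prod_right
    intro i _
    apply cyclotomic.isCoprime_rat
    intro hda
    have hdvd : d ∣ p ^ n := Nat.mem_divisors.mp hd |>.1
    obtain ⟨k, hk, hdk⟩ := (Nat.dvd_prime_pow hp).mp hdvd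
    have hk1 : 1 ≤ k := by
      by_contra hk0
      push_neg at hk0
      interval_cases k
      · simp [hdk, hda] at *
        have := ha2 i
        omega
    exact hpa i ⟨p ^ (k - 1), by
      rw [← hda, hdk, ← pow_succ']
      congr 1
      omega⟩
  obtain ⟨c, hc0, hcI⟩ := exists_int_mem_span _ _ hcop
  have hcI' : C c ∈ I := by
    refine Ideal.span_mono ?_ hcI
    intro x hx
    exact hx
  -- `ℤ[X]⧸I` is a finitely generated `ℤ`-module
  have hmon : (X ^ N - 1 : ℤ[X]).Monic := by
    have := monic_X_pow_sub_C (1 : ℤ) hNpos.ne'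
    simpa using this
  have hle : Ideal.span ({X ^ N - 1} : Set ℤ[X]) ≤ I := by
    rw [Ideal.span_le, Set.singleton_subset_iff]
    exact hf
  haveI hfinAR : Module.Finite ℤ (AdjoinRoot (X ^ N - 1 : ℤ[X])) :=
    Module.Finite.of_basis (AdjoinRoot.powerBasis' hmon).basis
  let φ : AdjoinRoot (X ^ N - 1 : ℤ[X]) →+* (ℤ[X] ⧸ I) :=
    Ideal.Quotient.factor hle
  have hφsurj : Function.Surjective φ := by
    intro x
    obtain ⟨q, rfl⟩ := Ideal.Quotient.mk_surjective x
    exact ⟨Ideal.Quotient.mk _ q, rfl⟩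
  haveI hfinQ : Module.Finite ℤ (ℤ[X] ⧸ I) :=
    Module.Finite.of_surjective φ.toIntAlgHom.toLinearMap hφsurj
  -- torsion
  have htor : Module.IsTorsion ℤ (ℤ[X] ⧸ I) := by
    intro x
    refine ⟨⟨c, mem_nonZeroDivisors_of_ne_zero hc0⟩, ?_⟩
    obtain ⟨q, rfl⟩ := Ideal.Quotient.mk_surjective x
    show c • (Ideal.Quotient.mk I q) = 0
    rw [← map_zsmul, smul_eq_C_mul]
    exact (Ideal.Quotient.eq_zero_iff_mem).mpr (I.mul_mem_right q hcI')
  exact Module.finite_of_fg_torsion _ htor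
end

section
/- Let A be a Noetherian ring, B = A[x_1, ..., x_n] a polynomial ring over A, and f ∈ B a polynomial whose coefficients generate the unit ideal of A. Then f is a non-zero-divisor in B and B/(f) is flat over A. -/
open MvPolynomial

section McCoy

/-- base-`d` encoding of an exponent vector. -/
private def enc (d : ℕ) {n : ℕ} (m : Fin n →₀ ℕ) : ℕ := ∑ i : Fin n, m i * d ^ (i : ℕ)

private lemma enc_inj_aux (d : ℕ) : ∀ (n : ℕ) (m₁ m₂ : Fin n → ℕ),
    (∀ i, m₁ i < d) → (∀ i, m₂ i < d) →
    (∑ i : Fin n, m₁ i * d ^ (i : ℕ)) = (∑ i : Fin n, m₂ i * d ^ (i : ℕ)) → m₁ = m₂ := by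
  intro n
  induction n with
  | zero => intro m₁ m₂ _ _ _; funext i; exact absurd i.2 (by omega)
  | succ k ih =>
    intro m₁ m₂ h₁ h₂ hsum
    have e : ∀ (m : Fin (k+1) → ℕ), (∑ i : Fin (k+1), m i * d ^ (i : ℕ))
        = m 0 + d * (∑ i : Fin k, m i.succ * d ^ (i : ℕ)) := by
      intro m
      rw [Fin.sum_univ_succ, Finset.mul_sum]
      simp only [pow_succ, Fin.val_succ, Fin.val_zero, pow_zero, mul_one]
      congr 1
      apply Finset.sum_congr rfl
      intro i _
      ring
    rw [e, e] at hsum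
    have h0 : m₁ 0 = m₂ 0 := by
      have := congrArg (· % d) hsum
      simpa [Nat.add_mul_mod_self_left, Nat.mod_eq_of_lt (h₁ 0), Nat.mod_eq_of_lt (h₂ 0)] using this
    have hd : 0 < d := lt_of_le_of_lt (Nat.zero_le _) (h₁ 0)
    have htail : (∑ i : Fin k, m₁ i.succ * d ^ (i : ℕ)) = ∑ i : Fin k, m₂ i.succ * d ^ (i : ℕ) := by
      have := hsum
      rw [h0] at this
      have := Nat.add_left_cancel this
      exact Nat.eq_of_mul_eq_mul_left hd this
    have := ih (fun i => m₁ i.succ) (fun i => m₂ i.succ) (fun i => h₁ i.succ) (fun i => h₂ i.succ) htail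
    funext i
    rcases Fin.eq_zero_or_eq_succ i with rfl | ⟨j, rfl⟩
    · exact h0
    · exact congrFun this j

private lemma enc_inj {d n : ℕ} {m₁ m₂ : Fin n →₀ ℕ}
    (h₁ : ∀ i, m₁ i < d) (h₂ : ∀ i, m₂ i < d) (h : enc d m₁ = enc d m₂) : m₁ = m₂ :=
  Finsupp.ext (congrFun (enc_inj_aux d n m₁ m₂ h₁ h₂ h))

private lemma kron_coeff {A : Type*} [CommRing A] {n d : ℕ} (p : MvPolynomial (Fin n) A)
    (hp : ∀ m ∈ p.support, ∀ i, m i < d) (m₀ : Fin n →₀ ℕ) (hm₀ : ∀ i, m₀ i < d) :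
    (aeval (fun i : Fin n => (Polynomial.X : Polynomial A) ^ d ^ (i : ℕ)) p).coeff (enc d m₀)
      = coeff m₀ p := by
  have kmon : ∀ (m : Fin n →₀ ℕ) (a : A),
      aeval (fun i : Fin n => (Polynomial.X : Polynomial A) ^ d ^ (i : ℕ)) (monomial m a)
        = Polynomial.C a * Polynomial.X ^ enc d m := by
    intro m a
    rw [aeval_monomial, Polynomial.algebraMap_eq]
    congr 1
    rw [Finsupp.prod_fintype _ _ (fun i => pow_zero _)]
    simp only [enc]
    rw [← Finset.prod_pow_eq_pow_sum]
    apply Finset.prod_congr rfl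
    intro i _
    rw [← pow_mul, mul_comm]
  conv_lhs => rw [p.as_sum]
  rw [map_sum, Polynomial.finset_sum_coeff]
  have : ∀ m ∈ p.support,
      (aeval (fun i : Fin n => (Polynomial.X : Polynomial A) ^ d ^ (i : ℕ))
        (monomial m (coeff m p))).coeff (enc d m₀)
      = if m = m₀ then coeff m p else 0 := by
    intro m hm
    rw [kmon, Polynomial.coeff_C_mul, Polynomial.coeff_X_pow]
    by_cases h : m = m₀
    · simp [h]
    · have : ¬ enc d m = enc d m₀ := fun he => h (enc_inj (hp m hm) hm₀ he)
      rw [if_neg (fun he : enc d m₀ = enc d m => this he.symm), if_neg h, mul_zero]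
  rw [Finset.sum_congr rfl this, Finset.sum_ite_eq' p.support m₀ (fun m => coeff m p)]
  split
  · rfl
  · exact (MvPolynomial.notMem_support_iff.mp (by assumption)).symm

/-- McCoy-type lemma: if the base-ring annihilator of the coefficients of `f` is trivial,
then `f` is a non-zero-divisor. -/
private lemma mccoy {A : Type*} [CommRing A] {n : ℕ} (f : MvPolynomial (Fin n) A)
    (hf : ∀ a : A, (∀ m, a * coeff m f = 0) → a = 0) (g : MvPolynomial (Fin n) A)
    (hg : f * g = 0) : g = 0 := by
  classical
  set d : ℕ := 1 + (f.support ∪ g.support).sup (fun m => Finset.univ.sup fun i => m i) with hd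
  have hbound : ∀ m ∈ f.support ∪ g.support, ∀ i, m i < d := by
    intro m hm i
    have h1 : m i ≤ Finset.univ.sup (fun i => m i) := Finset.le_sup (Finset.mem_univ i)
    have h2 : Finset.univ.sup (fun i => m i)
        ≤ (f.support ∪ g.support).sup (fun m => Finset.univ.sup fun i => m i) :=
      Finset.le_sup (f := fun m : Fin n →₀ ℕ => Finset.univ.sup fun i => m i) hm
    omega
  set φ := aeval (R := A) (fun i : Fin n => (Polynomial.X : Polynomial A) ^ d ^ (i : ℕ))
  have hφf : ∀ r : A, r • (φ f) = 0 → r = 0 := by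
    intro r hr
    apply hf
    intro m
    by_cases hm : m ∈ f.support
    · have hs : ∀ m' ∈ (r • f).support, ∀ i, m' i < d := by
        intro m' hm' i
        exact hbound m' (Finset.mem_union_left _ (Finsupp.support_smul hm')) i
      have := kron_coeff (d := d) (r • f) hs m (hbound m (Finset.mem_union_left _ hm))
      rw [map_smul, hr] at this
      simpa [coeff_smul, smul_eq_mul] using this.symm
    · rw [MvPolynomial.notMem_support_iff.mp hm, mul_zero]
  have hφg : φ g = 0 := by
    apply Polynomial.eq_zero_of_mul_eq_zero_of_smul (φ f) hφf
    rw [← map_mul, hg, map_zero]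
  ext m
  rw [coeff_zero]
  by_cases hm : m ∈ g.support
  · have := kron_coeff (d := d) g (fun m' hm' => hbound m' (Finset.mem_union_right _ hm'))
      m (hbound m (Finset.mem_union_right _ hm))
    rw [hφg] at this
    simpa using this.symm
  · exact MvPolynomial.notMem_support_iff.mp hm


/-- If coefficients of `f` generate the unit ideal, the image of `f` under any
base change along `q : A →+* A'` is a non-zero-divisor. -/
private lemma mccoy_map {A A' : Type*} [CommRing A] [CommRing A'] {n : ℕ}
    (f : MvPolynomial (Fin n) A)
    (hf : Ideal.span {a : A | ∃ m, coeff m f = a} = ⊤) (q : A →+* A')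
    (c : MvPolynomial (Fin n) A') (hc : MvPolynomial.map q f * c = 0) : c = 0 := by
  apply mccoy (MvPolynomial.map q f) _ c hc
  intro a ha
  have hann : Ideal.span {x : A | ∃ m, coeff m f = x}
      ≤ Ideal.comap q (LinearMap.ker (LinearMap.lsmul A' A' a)) := by
    rw [Ideal.span_le]
    rintro x ⟨m, rfl⟩
    simp only [SetLike.mem_coe, Ideal.mem_comap, LinearMap.mem_ker, LinearMap.lsmul_apply,
      smul_eq_mul]
    have := ha m
    rwa [MvPolynomial.coeff_map] at this
  rw [hf] at hann
  have h1 : (1 : A) ∈ Ideal.comap q (LinearMap.ker (LinearMap.lsmul A' A' a)) :=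
    hann Submodule.mem_top
  simpa using h1

end McCoy

/-- Lemma 3.1: let `A` be Noetherian, `B = A[x₁, …, xₙ]`, and `f ∈ B` a polynomial
whose coefficients generate the unit ideal of `A`. Then `f` is a non-zero-divisor
in `B` and `B/(f)` is flat over `A`. -/
theorem stmt_13 (A : Type*) [CommRing A] [IsNoetherianRing A] (n : ℕ)
    (f : MvPolynomial (Fin n) A)
    (hf : Ideal.span {a : A | ∃ m, coeff m f = a} = ⊤) :
    f ∈ nonZeroDivisors (MvPolynomial (Fin n) A) ∧
      Module.Flat A (MvPolynomial (Fin n) A ⧸ Ideal.span ({f} : Set (MvPolynomial (Fin n) A))) := by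
  classical
  have hnzd : f ∈ nonZeroDivisors (MvPolynomial (Fin n) A) := by
    rw [mem_nonZeroDivisors_iff_right]
    intro z hz
    have h0 : MvPolynomial.map (RingHom.id A) f * MvPolynomial.map (RingHom.id A) z = 0 := by
      simp only [MvPolynomial.map_id]
      rw [mul_comm]; exact hz
    have := mccoy_map f hf (RingHom.id A) _ h0
    simpa [MvPolynomial.map_id] using this
  refine ⟨hnzd, ?_⟩
  rw [Module.Flat.iff_rTensor_injective']
  intro I
  set J : Ideal (MvPolynomial (Fin n) A) := Ideal.span {f} with hJ
  set π : MvPolynomial (Fin n) A →ₗ[A] MvPolynomial (Fin n) A ⧸ J :=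
    (Ideal.Quotient.mkₐ A J).toLinearMap with hπ
  have hπs : Function.Surjective π := Ideal.Quotient.mkₐ_surjective A J
  set mult : TensorProduct A I (MvPolynomial (Fin n) A) →ₗ[A] MvPolynomial (Fin n) A :=
    (TensorProduct.lid A (MvPolynomial (Fin n) A)).toLinearMap
      ∘ₗ LinearMap.rTensor (MvPolynomial (Fin n) A) I.subtype with hmult
  have mult_tmul : ∀ (i : I) (b : MvPolynomial (Fin n) A), mult (i ⊗ₜ b) = (i : A) • b := by
    intro i b
    simp [hmult, TensorProduct.lid_tmul]
  have mult_inj : Function.Injective mult :=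
    (TensorProduct.lid A (MvPolynomial (Fin n) A)).injective.comp
      ((Module.Flat.iff_rTensor_injective' (R := A) (M := MvPolynomial (Fin n) A)).mp inferInstance I)
  set K : Ideal (MvPolynomial (Fin n) A) := I.map (algebraMap A (MvPolynomial (Fin n) A)) with hK
  have hKC : K = I.map (MvPolynomial.C : A →+* MvPolynomial (Fin n) A) := by
    rw [hK, MvPolynomial.algebraMap_eq]
  have mult_mem : ∀ y, mult y ∈ K := by
    intro y
    induction y using TensorProduct.induction_on with
    | zero => simp
    | tmul i b =>
      rw [mult_tmul, Algebra.smul_def]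
      exact Ideal.mul_mem_right _ _ (Ideal.mem_map_of_mem _ i.2)
    | add u v hu hv => rw [map_add]; exact K.add_mem hu hv
  have mult_mul : ∀ (b : MvPolynomial (Fin n) A) (z),
      b * mult z = mult (LinearMap.lTensor I (LinearMap.mulLeft A b) z) := by
    intro b z
    induction z using TensorProduct.induction_on with
    | zero => simp
    | tmul i t =>
      rw [mult_tmul, LinearMap.lTensor_tmul, mult_tmul, LinearMap.mulLeft_apply,
        mul_smul_comm]
    | add u v hu hv => rw [map_add, map_add, map_add, mul_add, hu, hv]
  have mem_range : ∀ x ∈ K, ∃ z, mult z = x := by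
    intro x hx
    rw [hK, Ideal.map] at hx
    refine Submodule.span_induction ?_ ?_ ?_ ?_ hx
    · rintro y ⟨i, hi, rfl⟩
      exact ⟨(⟨i, hi⟩ : I) ⊗ₜ 1, by rw [mult_tmul]; simp [Algebra.smul_def]⟩
    · exact ⟨0, map_zero _⟩
    · rintro y z - - ⟨zy, rfl⟩ ⟨zz, rfl⟩
      exact ⟨zy + zz, map_add _ _ _⟩
    · rintro b y - ⟨z, rfl⟩
      exact ⟨LinearMap.lTensor I (LinearMap.mulLeft A b) z, (mult_mul b z).symm⟩
  have hKker : K = RingHom.ker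
      (MvPolynomial.map (Ideal.Quotient.mk I) :
        MvPolynomial (Fin n) A →+* MvPolynomial (Fin n) (A ⧸ I)) := by
    rw [MvPolynomial.ker_map, Ideal.mk_ker, hKC]
  have hfreg : ∀ c : MvPolynomial (Fin n) A, f * c ∈ K → c ∈ K := by
    intro c hc
    rw [hKker, RingHom.mem_ker] at hc ⊢
    rw [map_mul] at hc
    exact mccoy_map f hf (Ideal.Quotient.mk I) _ hc
  have nat : π ∘ₗ mult = (TensorProduct.lid A (MvPolynomial (Fin n) A ⧸ J)).toLinearMap
      ∘ₗ LinearMap.rTensor (MvPolynomial (Fin n) A ⧸ J) I.subtype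
      ∘ₗ LinearMap.lTensor I π := by
    refine TensorProduct.ext' fun i b => ?_
    simp only [LinearMap.comp_apply, mult_tmul, LinearMap.lTensor_tmul, LinearMap.rTensor_tmul,
      Submodule.coe_subtype, LinearEquiv.coe_toLinearMap, TensorProduct.lid_tmul, map_smul]
  rw [injective_iff_map_eq_zero]
  intro x hx
  obtain ⟨y, rfl⟩ := LinearMap.lTensor_surjective I hπs x
  have hbJ : mult y ∈ J := by
    have hnat := LinearMap.congr_fun nat y
    simp only [LinearMap.comp_apply] at hnat
    rw [hx, LinearMap.map_zero] at hnat
    have : Ideal.Quotient.mk J (mult y) = 0 := hnat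
    exact Ideal.Quotient.eq_zero_iff_mem.mp this
  obtain ⟨c, hc⟩ := Ideal.mem_span_singleton'.mp hbJ
  have hfcK : f * c ∈ K := by rw [mul_comm, hc]; exact mult_mem y
  obtain ⟨z, hz⟩ := mem_range c (hfreg c hfcK)
  have heq : mult (LinearMap.lTensor I (LinearMap.mulLeft A f) z) = mult y := by
    rw [← mult_mul, hz, mul_comm, hc]
  have hy : y = LinearMap.lTensor I (LinearMap.mulLeft A f) z := (mult_inj heq).symm
  rw [hy, ← LinearMap.lTensor_comp_apply]
  have hcomp : π ∘ₗ LinearMap.mulLeft A f = 0 := by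
    apply LinearMap.ext; intro b
    simp only [LinearMap.comp_apply, LinearMap.mulLeft_apply, LinearMap.zero_apply]
    have : f * b ∈ J := Ideal.mem_span_singleton'.mpr ⟨b, mul_comm b f⟩
    exact Ideal.Quotient.eq_zero_iff_mem.mpr this
  rw [hcomp, LinearMap.lTensor_zero, LinearMap.zero_apply]
end

section
/- For coprime integers a, b ≥ 2, the ring A = ℂ[u, v]/(u^a + v^b) is an integral domain. -/
open Polynomial in
/-- Key field-theoretic step: no `p`-th root of `-X^n` in the fraction field of `ℂ[X]`. -/
lemma aux_no_root (n p : ℕ) (hn : 1 ≤ n) (hp : p.Prime) (hpn : ¬ p ∣ n)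
    (f : FractionRing (Polynomial ℂ)) :
    f ^ p ≠ -(algebraMap (Polynomial ℂ) (FractionRing (Polynomial ℂ)) (X ^ n)) := by
  intro hf
  obtain ⟨⟨r, s⟩, hs⟩ := IsLocalization.surj (nonZeroDivisors (Polynomial ℂ)) f
  have hs0 : (s : Polynomial ℂ) ≠ 0 := nonZeroDivisors.coe_ne_zero s
  have key : r ^ p = -(X ^ n * (s : Polynomial ℂ) ^ p) := by
    apply IsFractionRing.injective (Polynomial ℂ) (FractionRing (Polynomial ℂ))
    have h2 : (algebraMap (Polynomial ℂ) (FractionRing (Polynomial ℂ))) (r ^ p)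
        = f ^ p * algebraMap (Polynomial ℂ) (FractionRing (Polynomial ℂ)) ((s : Polynomial ℂ) ^ p) := by
      rw [map_pow, ← hs, mul_pow, map_pow]
    rw [h2, hf, map_neg, map_mul]
    ring
  have hr0 : r ≠ 0 := by
    intro h
    rw [h, zero_pow hp.ne_zero, eq_comm, neg_eq_zero, mul_eq_zero] at key
    rcases key with h1 | h1
    · exact pow_ne_zero n X_ne_zero h1
    · exact pow_ne_zero p hs0 h1
  have hdeg := congrArg natDegree key
  rw [natDegree_pow, natDegree_neg, natDegree_mul (pow_ne_zero n X_ne_zero)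
    (pow_ne_zero p hs0), natDegree_pow, natDegree_pow, natDegree_X, mul_one] at hdeg
  exact hpn (by
    have : n = p * r.natDegree - p * (s : Polynomial ℂ).natDegree := by omega
    exact this ▸ Nat.dvd_sub ⟨r.natDegree, rfl⟩ ⟨(s : Polynomial ℂ).natDegree, rfl⟩)

open Polynomial in
lemma aux_irred (m n : ℕ) (hm : Odd m) (hm1 : 1 ≤ m) (hn : 1 ≤ n) (hcop : Nat.Coprime m n) :
    Irreducible ((X : Polynomial (Polynomial ℂ)) ^ m + C (X ^ n)) := by
  have hmonic : ((X : Polynomial (Polynomial ℂ)) ^ m + C (X ^ n)).Monic :=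
    monic_X_pow_add_C _ (by omega)
  rw [hmonic.irreducible_iff_irreducible_map_fraction_map (K := FractionRing (Polynomial ℂ))]
  have : ((X : Polynomial (Polynomial ℂ)) ^ m + C (X ^ n)).map
      (algebraMap (Polynomial ℂ) (FractionRing (Polynomial ℂ)))
      = X ^ m - C (-(algebraMap (Polynomial ℂ) (FractionRing (Polynomial ℂ)) (X ^ n))) := by
    simp [sub_neg_eq_add]
  rw [this]
  exact X_pow_sub_C_irreducible_of_odd hm fun p hp hpm f =>
    aux_no_root n p hn hp
      (fun hpn => hp.one_lt.ne' (Nat.eq_one_of_dvd_one (hcop ▸ Nat.dvd_gcd hpm hpn)))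
      f

lemma prime_of_mulEquiv {M N : Type*} [CommMonoidWithZero M] [CommMonoidWithZero N]
    (e : M ≃* N) {p : M} (hp : Prime p) : Prime (e p) := (MulEquiv.prime_iff e).mpr hp

open Polynomial MvPolynomial in
lemma aux_prime (m n : ℕ) (hm : Odd m) (hm1 : 1 ≤ m) (hn : 1 ≤ n) (hcop : Nat.Coprime m n) :
    Prime (MvPolynomial.X (0 : Fin 2) ^ m + MvPolynomial.X 1 ^ n : MvPolynomial (Fin 2) ℂ) := by
  let e : MvPolynomial (Fin 2) ℂ ≃ₐ[ℂ] Polynomial (Polynomial ℂ) :=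
    (MvPolynomial.finSuccEquiv ℂ 1).trans (Polynomial.mapAlgEquiv
      ((MvPolynomial.finSuccEquiv ℂ 0).trans (Polynomial.mapAlgEquiv (isEmptyAlgEquiv ℂ (Fin 0)))))
  have hprime : Prime (Polynomial.X ^ m + Polynomial.C (Polynomial.X ^ n) :
      Polynomial (Polynomial ℂ)) :=
    UniqueFactorizationMonoid.irreducible_iff_prime.mp (aux_irred m n hm hm1 hn hcop)
  refine (MulEquiv.prime_iff e.toMulEquiv).mp ?_
  show Prime (e (MvPolynomial.X 0 ^ m + MvPolynomial.X 1 ^ n))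
  have h0 : e (MvPolynomial.X 0) = Polynomial.X := by
    simp only [e, AlgEquiv.trans_apply, finSuccEquiv_X_zero, Polynomial.coe_mapAlgEquiv,
      Polynomial.map_X]
  have h1 : e (MvPolynomial.X 1) = Polynomial.C Polynomial.X := by
    have h : (1 : Fin 2) = Fin.succ 0 := rfl
    simp only [e, h, AlgEquiv.trans_apply, finSuccEquiv_X_succ, Polynomial.coe_mapAlgEquiv,
      Polynomial.map_C, finSuccEquiv_X_zero, Polynomial.map_X]
    simp [finSuccEquiv_X_zero]
  have himg : e (MvPolynomial.X 0 ^ m + MvPolynomial.X 1 ^ n)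
      = Polynomial.X ^ m + Polynomial.C (Polynomial.X ^ n) := by
    rw [map_add, map_pow, map_pow, h0, h1, ← Polynomial.C_pow]
  rw [himg]
  exact hprime

/-- For coprime `a, b ≥ 2`, the ring `ℂ[u,v]/(u^a + v^b)` is an integral domain. -/
theorem stmt_15 (a b : ℕ) (ha : 2 ≤ a) (hb : 2 ≤ b) (hcop : Nat.Coprime a b) :
    IsDomain (MvPolynomial (Fin 2) ℂ ⧸
      Ideal.span ({MvPolynomial.X 0 ^ a + MvPolynomial.X 1 ^ b} :
        Set (MvPolynomial (Fin 2) ℂ))) := by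
  have hp : Prime (MvPolynomial.X (0 : Fin 2) ^ a + MvPolynomial.X 1 ^ b :
      MvPolynomial (Fin 2) ℂ) := by
    rcases Nat.even_or_odd a with hae | hao
    · have hbo : Odd b := by
        rcases Nat.even_or_odd b with hbe | hbo
        · exfalso
          have h2 : 2 ∣ Nat.gcd a b :=
            Nat.dvd_gcd (even_iff_two_dvd.mp hae) (even_iff_two_dvd.mp hbe)
          rw [hcop] at h2
          omega
        · exact hbo
      have hb' := aux_prime b a hbo (by omega) (by omega) hcop.symm
      have := prime_of_mulEquiv
        (MvPolynomial.renameEquiv ℂ (Equiv.swap (0 : Fin 2) 1)).toMulEquiv hb'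
      have himg : (MvPolynomial.renameEquiv ℂ (Equiv.swap (0 : Fin 2) 1)).toMulEquiv
          (MvPolynomial.X (0 : Fin 2) ^ b + MvPolynomial.X 1 ^ a)
          = MvPolynomial.X (0 : Fin 2) ^ a + MvPolynomial.X 1 ^ b := by
        show (MvPolynomial.renameEquiv ℂ (Equiv.swap (0 : Fin 2) 1))
          (MvPolynomial.X (0 : Fin 2) ^ b + MvPolynomial.X 1 ^ a) = _
        simp [MvPolynomial.renameEquiv_apply, MvPolynomial.rename_X, add_comm]
      rwa [himg] at this
    · exact aux_prime a b hao (by omega) (by omega) hcop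
  rw [Ideal.Quotient.isDomain_iff_prime]
  exact (Ideal.span_singleton_prime hp.ne_zero).mpr hp
end

section
/- Let a, b ≥ 2 be coprime integers with b odd, and let A = ℂ[u, v]/(u^a + v^b). Then the localization A[u^{-1}] of A at u is isomorphic as a ℂ-algebra to ℂ[t, t^{-1}], via the map sending u to t^b and v to -t^a. -/
set_option synthInstance.maxHeartbeats 1000000
set_option maxHeartbeats 1000000

open LaurentPolynomial

noncomputable section

/-- The coordinate ring `A = ℂ[u,v]/(u^a + v^b)`. -/
abbrev stmt16Ring (a b : ℕ) : Type :=
  MvPolynomial (Fin 2) ℂ ⧸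
    Ideal.span ({MvPolynomial.X 0 ^ a + MvPolynomial.X 1 ^ b} :
      Set (MvPolynomial (Fin 2) ℂ))

/-- The class of `u` in `A`. -/
abbrev stmt16u (a b : ℕ) : stmt16Ring a b := Ideal.Quotient.mk _ (MvPolynomial.X 0)

/-- The class of `v` in `A`. -/
abbrev stmt16v (a b : ℕ) : stmt16Ring a b := Ideal.Quotient.mk _ (MvPolynomial.X 1)

namespace Stmt16Aux

open MvPolynomial

/-- The units `T n` of the Laurent polynomial ring, as a monoid hom. -/
def TU : Multiplicative ℤ →* (LaurentPolynomial ℂ)ˣ where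
  toFun n := ⟨T n.toAdd, T (-n.toAdd),
    by rw [← T_add, add_neg_cancel, T_zero],
    by rw [← T_add, neg_add_cancel, T_zero]⟩
  map_one' := Units.ext (by show T (Multiplicative.toAdd 1) = 1; rw [toAdd_one, T_zero])
  map_mul' m n := Units.ext (by
    show T (Multiplicative.toAdd (m * n)) = T m.toAdd * T n.toAdd
    rw [← T_add, toAdd_mul])

@[simp] lemma TU_coe (n : ℤ) :
    (TU (Multiplicative.ofAdd n) : LaurentPolynomial ℂ) = T n := rfl

@[simp] lemma TU_coe' (n : Multiplicative ℤ) :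
    (TU n : LaurentPolynomial ℂ) = T n.toAdd := rfl

/-- `u ↦ T b`, `v ↦ -T a` on the polynomial ring. -/
def phi0 (a b : ℕ) : MvPolynomial (Fin 2) ℂ →ₐ[ℂ] LaurentPolynomial ℂ :=
  aeval ![T (b : ℤ), -T (a : ℤ)]

@[simp] lemma phi0_X0 (a b : ℕ) : phi0 a b (X 0) = T (b : ℤ) := by
  simp [phi0]

@[simp] lemma phi0_X1 (a b : ℕ) : phi0 a b (X 1) = -T (a : ℤ) := by
  simp [phi0]

lemma phi0_rel (a b : ℕ) (hodd : Odd b) :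
    phi0 a b (X 0 ^ a + X 1 ^ b) = 0 := by
  rw [map_add, map_pow, map_pow, phi0_X0, phi0_X1, hodd.neg_pow, T_pow, T_pow,
    mul_comm (a : ℤ) (b : ℤ)]
  ring

/-- The induced map on `A`. -/
def phiA (a b : ℕ) (hodd : Odd b) : stmt16Ring a b →ₐ[ℂ] LaurentPolynomial ℂ :=
  Ideal.Quotient.liftₐ _ (phi0 a b) (by
    intro p hp
    obtain ⟨c, rfl⟩ := Ideal.mem_span_singleton'.mp hp
    rw [map_mul, phi0_rel a b hodd, mul_zero])

@[simp] lemma phiA_u (a b : ℕ) (hodd : Odd b) :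
    phiA a b hodd (stmt16u a b) = T (b : ℤ) := by
  simp [phiA, stmt16u]
  exact phi0_X0 a b

@[simp] lemma phiA_v (a b : ℕ) (hodd : Odd b) :
    phiA a b hodd (stmt16v a b) = -T (a : ℤ) := by
  simp [phiA, stmt16v]
  exact phi0_X1 a b

@[simp] lemma phiA_C (a b : ℕ) (hodd : Odd b) (c : ℂ) :
    phiA a b hodd (Ideal.Quotient.mk _ (MvPolynomial.C c)) = LaurentPolynomial.C c := by
  simp [phiA, phi0, ← LaurentPolynomial.C_eq_algebraMap]
  exact (show aeval ![T (b : ℤ), -T (a : ℤ)] (MvPolynomial.C c) = LaurentPolynomial.C c by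
    simp [← LaurentPolynomial.C_eq_algebraMap])

end Stmt16Aux

open Stmt16Aux in
/-- Let `a, b ≥ 2` be coprime with `b` odd, and `A = ℂ[u,v]/(u^a + v^b)`. Then the
localization `A[u⁻¹]` of `A` at `u` is isomorphic as a `ℂ`-algebra to the Laurent
polynomial ring `ℂ[t, t⁻¹]`, via `u ↦ t^b` and `v ↦ -t^a`. -/
theorem stmt_16 (a b : ℕ) (ha : 2 ≤ a) (hb : 2 ≤ b) (hcop : Nat.Coprime a b)
    (hodd : Odd b) :
    ∃ e : Localization.Away (stmt16u a b) ≃+* LaurentPolynomial ℂ,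
      e (algebraMap _ _ (stmt16u a b)) = T (b : ℤ) ∧
      e (algebraMap _ _ (stmt16v a b)) = - T (a : ℤ) ∧
      ∀ c : ℂ, e (algebraMap (stmt16Ring a b) (Localization.Away (stmt16u a b))
          (Ideal.Quotient.mk _ (MvPolynomial.C c))) = LaurentPolynomial.C c := by
  classical
  have hφunit : IsUnit ((phiA a b hodd : stmt16Ring a b →+* LaurentPolynomial ℂ)
      (stmt16u a b)) := by
    rw [AlgHom.coe_ringHom_mk] <;> skip
    simpa using isUnit_T (R := ℂ) (b : ℤ)
  let φ : (Localization.Away (stmt16u a b)) →+* LaurentPolynomial ℂ :=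
    Localization.awayLift (phiA a b hodd : (stmt16Ring a b) →+* LaurentPolynomial ℂ) _ hφunit
  have hφ : ∀ x : (stmt16Ring a b), φ (algebraMap (stmt16Ring a b) (Localization.Away (stmt16u a b)) x) = phiA a b hodd x := fun x =>
    IsLocalization.Away.lift_eq _ hφunit x
  -- the relation in (stmt16Ring a b)
  have hrel : (stmt16u a b) ^ a + (stmt16v a b) ^ b = 0 := by
    rw [← map_pow, ← map_pow, ← map_add]
    exact Ideal.Quotient.eq_zero_iff_mem.mpr (Ideal.subset_span rfl)
  have hrel' : (- stmt16v a b) ^ b = (stmt16u a b) ^ a :=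
    (hodd.neg_pow (stmt16v a b)).trans (by linear_combination -hrel)
  -- units in (Localization.Away (stmt16u a b))
  have hUunit : IsUnit (algebraMap (stmt16Ring a b) (Localization.Away (stmt16u a b)) (stmt16u a b)) :=
    IsLocalization.map_units (Localization.Away (stmt16u a b)) ⟨stmt16u a b, Submonoid.mem_powers _⟩
  have hVunit : IsUnit (algebraMap (stmt16Ring a b) (Localization.Away (stmt16u a b)) (- stmt16v a b)) := by
    have hpow : IsUnit ((algebraMap (stmt16Ring a b) (Localization.Away (stmt16u a b)) (- stmt16v a b)) ^ b) := by
      rw [← map_pow, hrel', map_pow]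
      exact hUunit.pow a
    exact (isUnit_pow_iff (by omega)).mp hpow
  set U : (Localization.Away (stmt16u a b))ˣ := hUunit.unit with hU
  set V : (Localization.Away (stmt16u a b))ˣ := hVunit.unit with hV
  have hUV : V ^ b = U ^ a := Units.ext (by
    rw [Units.val_pow_eq_pow_val, Units.val_pow_eq_pow_val, hU, hV,
      IsUnit.unit_spec, IsUnit.unit_spec, ← map_pow, ← map_pow, hrel'])
  have hVb : V ^ (b : ℤ) = U ^ (a : ℤ) := by
    rw [zpow_natCast, zpow_natCast, hUV]
  -- Bezout
  obtain ⟨x, y, hxy⟩ : ∃ x y : ℤ, (b : ℤ) * x + (a : ℤ) * y = 1 := by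
    refine ⟨Int.gcdB a b, Int.gcdA a b, ?_⟩
    have h2 := Int.gcd_eq_gcd_ab (a : ℤ) (b : ℤ)
    have h1 : ((a : ℤ).gcd (b : ℤ) : ℤ) = 1 := by
      simp [Int.gcd_natCast_natCast, hcop]
    linarith
  set t : (Localization.Away (stmt16u a b))ˣ := U ^ x * V ^ y with ht
  have key : ∀ n : ℤ, V ^ (n * (b : ℤ)) = U ^ (n * (a : ℤ)) := fun n => by
    rw [mul_comm n, zpow_mul, mul_comm n, zpow_mul, hVb]
  have ht_b : t ^ (b : ℤ) = U := by
    rw [ht, mul_zpow, ← zpow_mul, ← zpow_mul, key y, ← zpow_add,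
      show x * (b : ℤ) + y * (a : ℤ) = 1 by linarith, zpow_one]
  have ht_a : t ^ (a : ℤ) = V := by
    rw [ht, mul_zpow, ← zpow_mul, ← zpow_mul, ← key x, ← zpow_add,
      show x * (b : ℤ) + y * (a : ℤ) = 1 by linarith, zpow_one]
  -- the inverse map
  let ψa : LaurentPolynomial ℂ →ₐ[ℂ] (Localization.Away (stmt16u a b)) :=
    (AddMonoidAlgebra.lift ℂ (Localization.Away (stmt16u a b)) ℤ)
      ((Units.coeHom (Localization.Away (stmt16u a b))).comp ((zpowersHom (Localization.Away (stmt16u a b))ˣ) t))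
  let ψ : LaurentPolynomial ℂ →+* (Localization.Away (stmt16u a b)) := ψa.toRingHom
  have hψT : ∀ n : ℤ, ψ (T n) = ((t ^ n : (Localization.Away (stmt16u a b))ˣ) : (Localization.Away (stmt16u a b))) := by
    intro n
    show ψa (AddMonoidAlgebra.single n 1) = _
    rw [AddMonoidAlgebra.lift_single, one_smul]
    simp [zpowersHom_apply]
  have hψC : ∀ c : ℂ, ψ (LaurentPolynomial.C c) = algebraMap ℂ (Localization.Away (stmt16u a b)) c := fun c => by
    rw [LaurentPolynomial.C_eq_algebraMap]; exact ψa.commutes c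
  -- composite φ ∘ ψ
  have hφt : ∀ n : ℤ, φ ((t ^ n : (Localization.Away (stmt16u a b))ˣ) : (Localization.Away (stmt16u a b))) = T n := by
    intro n
    have hFU : Units.map (φ : (Localization.Away (stmt16u a b)) →* LaurentPolynomial ℂ) U
        = TU (Multiplicative.ofAdd (b : ℤ)) := Units.ext (by
      show φ (U : (Localization.Away (stmt16u a b))) = _
      rw [hU, IsUnit.unit_spec, hφ, phiA_u, TU_coe])
    have hFV : Units.map (φ : (Localization.Away (stmt16u a b)) →* LaurentPolynomial ℂ) V
        = TU (Multiplicative.ofAdd (a : ℤ)) := Units.ext (by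
      show φ (V : (Localization.Away (stmt16u a b))) = _
      rw [hV, IsUnit.unit_spec, hφ, map_neg, phiA_v, neg_neg, TU_coe])
    have hmap : Units.map (φ : (Localization.Away (stmt16u a b)) →* LaurentPolynomial ℂ) (t ^ n)
        = TU (Multiplicative.ofAdd n) := by
      rw [map_zpow, ht, map_mul, map_zpow, map_zpow, hFU, hFV,
        ← map_zpow TU, ← map_zpow TU, ← map_mul TU, ← map_zpow TU]
      congr 1
      rw [← ofAdd_zsmul, ← ofAdd_zsmul, ← ofAdd_add, ← ofAdd_zsmul]
      congr 1
      simp only [smul_eq_mul]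
      have h1 : x * (b : ℤ) + y * (a : ℤ) = 1 := by linarith
      rw [h1, mul_one]
    have hval := congrArg Units.val hmap
    rw [Units.coe_map] at hval
    simpa using hval
  have hcomp2 : φ.comp ψ = RingHom.id (LaurentPolynomial ℂ) := by
    apply AddMonoidAlgebra.ringHom_ext
    · intro c
      show φ (ψ (LaurentPolynomial.C c)) = LaurentPolynomial.C c
      rw [hψC, IsScalarTower.algebraMap_apply ℂ (stmt16Ring a b) (Localization.Away (stmt16u a b)), hφ,
        AlgHom.commutes, ← LaurentPolynomial.C_eq_algebraMap]
    · intro n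
      show φ (ψ (T n)) = T n
      rw [hψT, hφt]
  have hcomp1 : ψ.comp φ = RingHom.id (Localization.Away (stmt16u a b)) := by
    refine IsLocalization.ringHom_ext (S := Localization.Away (stmt16u a b)) (Submonoid.powers (stmt16u a b)) (j := ψ.comp φ) (k := RingHom.id _) ?_
    apply Ideal.Quotient.ringHom_ext
    refine MvPolynomial.ringHom_ext ?_ ?_
    · intro c
      show ψ (φ (algebraMap (stmt16Ring a b) (Localization.Away (stmt16u a b)) (Ideal.Quotient.mk _ (MvPolynomial.C c))))
          = algebraMap (stmt16Ring a b) (Localization.Away (stmt16u a b)) (Ideal.Quotient.mk _ (MvPolynomial.C c))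
      rw [hφ, phiA_C, hψC, IsScalarTower.algebraMap_apply ℂ (stmt16Ring a b) (Localization.Away (stmt16u a b))]
      rfl
    · intro i
      fin_cases i
      · show ψ (φ (algebraMap (stmt16Ring a b) (Localization.Away (stmt16u a b)) (stmt16u a b))) = algebraMap (stmt16Ring a b) (Localization.Away (stmt16u a b)) (stmt16u a b)
        rw [hφ, phiA_u, hψT, ht_b, hU, IsUnit.unit_spec]
      · show ψ (φ (algebraMap (stmt16Ring a b) (Localization.Away (stmt16u a b)) (stmt16v a b))) = algebraMap (stmt16Ring a b) (Localization.Away (stmt16u a b)) (stmt16v a b)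
        rw [hφ, phiA_v, map_neg, hψT, ht_a, hV, IsUnit.unit_spec, map_neg]
        exact neg_neg ((algebraMap (stmt16Ring a b) (Localization.Away (stmt16u a b))) (stmt16v a b))
  refine ⟨RingEquiv.ofRingHom φ ψ hcomp2 hcomp1, ?_, ?_, ?_⟩
  · show φ (algebraMap (stmt16Ring a b) (Localization.Away (stmt16u a b)) (stmt16u a b)) = T (b : ℤ)
    rw [hφ, phiA_u]
  · show φ (algebraMap (stmt16Ring a b) (Localization.Away (stmt16u a b)) (stmt16v a b)) = - T (a : ℤ)
    rw [hφ, phiA_v]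
  · intro c
    show φ (algebraMap (stmt16Ring a b) (Localization.Away (stmt16u a b)) (Ideal.Quotient.mk _ (MvPolynomial.C c))) = LaurentPolynomial.C c
    rw [hφ, phiA_C]

end
end
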